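/- Detection of low-degree cheating: if Lagrange reconstruction at 0 from every subset of exactly k−1 of the n shares of a polynomial P of degree at most k−1 agrees with the reconstruction from all n shares, then P has degree at most k−2. -/

import Mathlib

/-- detection of low-degree cheating: if Lagrange reconstruction at `0` from every
subset of exactly `k-1` of the `n` shares of `P` (of degree `< k`) agrees with `P.eval 0`, then
`P` has degree `< k - 1` (i.e. at most `k - 2`). -/
theorem stmt9 (q k n : ℕ) [Fact q.Prime] (hk : 1 ≤ k) (hn : k ≤ n)
    (x : Fin n → ZMod q) (hx : Function.Injective x) (hx0 : ∀ j, x j ≠ 0)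
    (P : Polynomial (ZMod q)) (hdeg : P.degree < (k : WithBot ℕ))
    (h : ∀ T : Finset (Fin n), T.card = k - 1 →
      (Lagrange.interpolate T x (fun j => P.eval (x j))).eval 0 = P.eval 0) :
    P.degree < ((k - 1 : ℕ) : WithBot ℕ) := by
  classical
  obtain ⟨T, -, hT⟩ := Finset.exists_subset_card_eq
    (show k - 1 ≤ (Finset.univ : Finset (Fin n)).card by simp; omega)
  set Q := Lagrange.interpolate T x (fun j => P.eval (x j)) with hQ
  have hinj : Set.InjOn x T := hx.injOn
  have hdQ : Q.degree < (T.card : WithBot ℕ) := Lagrange.degree_interpolate_lt _ hinj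
  suffices hPQ : P = Q by
    rw [hPQ, hT] at *; exact hdQ
  have hR : P - Q = 0 := by
    set s : Finset (ZMod q) := insert 0 (T.image x) with hs
    have hcard : s.card = k := by
      rw [hs, Finset.card_insert_of_notMem, Finset.card_image_of_injective _ hx, hT]
      · omega
      · intro hmem
        obtain ⟨j, -, hj0⟩ := Finset.mem_image.mp hmem
        exact hx0 j hj0
    apply Polynomial.eq_zero_of_natDegree_lt_card_of_eval_eq_zero' _ s
    · intro i hi
      rw [hs, Finset.mem_insert] at hi
      rcases hi with rfl | hi
      · rw [Polynomial.eval_sub, hQ, h T hT, sub_self]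
      · obtain ⟨j, hj, rfl⟩ := Finset.mem_image.mp hi
        rw [Polynomial.eval_sub, hQ, Lagrange.eval_interpolate_at_node _ hinj hj, sub_self]
    · rw [hcard]
      rcases eq_or_ne (P - Q) 0 with h0 | h0
      · simp [h0]; omega
      · have : (P - Q).degree < (k : WithBot ℕ) := by
          apply lt_of_le_of_lt (Polynomial.degree_sub_le _ _)
          apply max_lt hdeg (hdQ.trans_le _)
          rw [hT]
          exact_mod_cast Nat.cast_le.mpr (Nat.sub_le k 1)
        exact (Polynomial.natDegree_lt_iff_degree_lt h0).mpr this
  exact sub_eq_zero.mp hR
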